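/- Let x, y, z : ℕ → ℝ satisfy x 1 = 0, y 1 = 1, z 1 = 1, and for every n ≥ 1: z (n+1) = (z n + 2)/(z n + 3), x (n+1) = (x n - y n + z n + 2)(-x n + y n + z n + 4)/(4(z n + 3)) + (x n + y n - z n)/2, and y (n+1) = (-x n + y n + z n + 2)(x n - y n + z n + 4)/(4(z n + 3)) + (x n + y n - z n)/2. Then for every n ≥ 1, x n = (n - 2 - √3)/2 + √3/(1 + (2 - √3)^n) and y n = (n - 2 - √3)/2 + √3/(1 - (2 - √3)^n). -/

import Mathlib

set_option maxHeartbeats 1000000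

lemma rpows (r : ℝ) (hr : r^2 = 3) :
    r^3 = 3*r ∧ r^4 = 9 ∧ r^5 = 9*r ∧ r^6 = 27 ∧ r^7 = 27*r ∧ r^8 = 81 := by
  refine ⟨?_, ?_, ?_, ?_, ?_, ?_⟩
  · rw [pow_succ, hr]
  · rw [show r^4 = (r^2)^2 by ring, hr]; norm_num
  · rw [pow_succ, show r^4 = (r^2)^2 by ring, hr]; norm_num
  · rw [show r^6 = (r^2)^3 by ring, hr]; norm_num
  · rw [pow_succ, show r^6 = (r^2)^3 by ring, hr]; norm_num
  · rw [show r^8 = (r^2)^4 by ring, hr]; norm_num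

lemma zstep (r u : ℝ) (hr : r^2 = 3) (hr1 : 1 < r) (hr2 : r < 2)
    (hu0 : 0 < u) (hu1 : u < 1) :
    (r - 1 + (r+1)*((2-r)*u)^2)/(1 - ((2-r)*u)^2)
      = ((r - 1 + (r+1)*u^2)/(1 - u^2) + 2) / ((r - 1 + (r+1)*u^2)/(1 - u^2) + 3) := by
  obtain ⟨h3, h4, h5, h6, h7, h8⟩ := rpows r hr
  have hv0 : 0 < (2-r)*u := mul_pos (by linarith) hu0
  have hv1 : (2-r)*u < 1 := by nlinarith
  have hd1 : 1 - u^2 ≠ 0 := by nlinarith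
  have hd2 : 1 - ((2-r)*u)^2 ≠ 0 := by
    nlinarith [mul_pos (show (0:ℝ) < 1 - (2-r)*u by linarith)
      (show (0:ℝ) < 1 + (2-r)*u by linarith)]
  have hw : (r - 1 + (r+1)*u^2)/(1 - u^2) + 3 ≠ 0 := by
    have h := div_pos (show 0 < r - 1 + (r+1)*u^2 by nlinarith)
      (show 0 < 1 - u^2 by nlinarith)
    linarith
  have hw2 : 2 + r + (r*u^2 - u^2*2) ≠ 0 := by nlinarith
  field_simp
  have hB : 1 - (2 - r) ^ 2 * u ^ 2 ≠ 0 := by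
    intro h; apply hd2; linear_combination h
  have hD : r - 1 + (r + 1) * u ^ 2 + (1 - u ^ 2) * 3 ≠ 0 := by
    intro h; apply hw2; linear_combination h
  rw [div_eq_div_iff hB hD]
  ring_nf
  simp only [hr, h3, h4, h5, h6, h7, h8]
  ring

lemma xstep (r u : ℝ) (hr : r^2 = 3) (hr1 : 1 < r) (hr2 : r < 2)
    (hu0 : 0 < u) (hu1 : u < 1) :
    1/2 + r/(1+(2-r)*u)
      = (r/(1+u) - r/(1-u) + (r - 1 + (r+1)*u^2)/(1 - u^2) + 2)
          * (-(r/(1+u)) + r/(1-u) + (r - 1 + (r+1)*u^2)/(1 - u^2) + 4)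
          / (4 * ((r - 1 + (r+1)*u^2)/(1 - u^2) + 3))
        + (r/(1+u) + r/(1-u) - (r - 1 + (r+1)*u^2)/(1 - u^2)) / 2 := by
  obtain ⟨h3, h4, h5, h6, h7, h8⟩ := rpows r hr
  have hp : (1:ℝ) + u ≠ 0 := by linarith
  have hm : (1:ℝ) - u ≠ 0 := by linarith
  have hd1 : 1 - u^2 ≠ 0 := by nlinarith
  have e1 : r/(1+u) - r/(1-u) + (r - 1 + (r+1)*u^2)/(1 - u^2) + 2
      = (r-1)*(2+r-u)/(1+u) := by
    field_simp
    ring_nf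
    simp only [hr, h3, h4, h5, h6, h7, h8]
    ring
  have e2 : -(r/(1+u)) + r/(1-u) + (r - 1 + (r+1)*u^2)/(1 - u^2) + 4
      = (3-r)*(2+r-u)/(1-u) := by
    field_simp
    ring_nf
    simp only [hr, h3, h4, h5, h6, h7, h8]
    ring
  have e3 : (r - 1 + (r+1)*u^2)/(1 - u^2) + 3
      = (2-r)*((2+r-u)*(2+r+u))/(1-u^2) := by
    field_simp
    ring_nf
    simp only [hr, h3, h4, h5, h6, h7, h8]
    ring
  have e4 : r/(1+u) + r/(1-u) - (r - 1 + (r+1)*u^2)/(1 - u^2) = r + 1 := by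
    field_simp
    ring
  rw [e1, e2, e3, e4]
  have hq1 : (2:ℝ)+r-u ≠ 0 := by linarith
  have hq2 : (2:ℝ)+r+u ≠ 0 := by linarith
  have hq3 : (2:ℝ)-r ≠ 0 := by linarith
  have hsv : 1 + (2-r)*u ≠ 0 := by
    have : 0 < (2-r)*u := mul_pos (by linarith) hu0
    linarith
  field_simp
  ring_nf
  simp only [hr, h3, h4, h5, h6, h7, h8]
  ring

lemma ystep (r u : ℝ) (hr : r^2 = 3) (hr1 : 1 < r) (hr2 : r < 2)
    (hu0 : 0 < u) (hu1 : u < 1) :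
    1/2 + r/(1-(2-r)*u)
      = (-(r/(1+u)) + r/(1-u) + (r - 1 + (r+1)*u^2)/(1 - u^2) + 2)
          * (r/(1+u) - r/(1-u) + (r - 1 + (r+1)*u^2)/(1 - u^2) + 4)
          / (4 * ((r - 1 + (r+1)*u^2)/(1 - u^2) + 3))
        + (r/(1+u) + r/(1-u) - (r - 1 + (r+1)*u^2)/(1 - u^2)) / 2 := by
  obtain ⟨h3, h4, h5, h6, h7, h8⟩ := rpows r hr
  have hp : (1:ℝ) + u ≠ 0 := by linarith
  have hm : (1:ℝ) - u ≠ 0 := by linarith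
  have hd1 : 1 - u^2 ≠ 0 := by nlinarith
  have e1 : -(r/(1+u)) + r/(1-u) + (r - 1 + (r+1)*u^2)/(1 - u^2) + 2
      = (r-1)*(2+r+u)/(1-u) := by
    field_simp
    ring_nf
    simp only [hr, h3, h4, h5, h6, h7, h8]
    ring
  have e2 : r/(1+u) - r/(1-u) + (r - 1 + (r+1)*u^2)/(1 - u^2) + 4
      = (3-r)*(2+r+u)/(1+u) := by
    field_simp
    ring_nf
    simp only [hr, h3, h4, h5, h6, h7, h8]
    ring
  have e3 : (r - 1 + (r+1)*u^2)/(1 - u^2) + 3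
      = (2-r)*((2+r-u)*(2+r+u))/(1-u^2) := by
    field_simp
    ring_nf
    simp only [hr, h3, h4, h5, h6, h7, h8]
    ring
  have e4 : r/(1+u) + r/(1-u) - (r - 1 + (r+1)*u^2)/(1 - u^2) = r + 1 := by
    field_simp
    ring
  rw [e1, e2, e3, e4]
  have hq1 : (2:ℝ)+r-u ≠ 0 := by linarith
  have hq2 : (2:ℝ)+r+u ≠ 0 := by linarith
  have hq3 : (2:ℝ)-r ≠ 0 := by linarith
  have hsv : 1 - (2-r)*u ≠ 0 := by nlinarith
  field_simp
  ring_nf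
  simp only [hr, h3, h4, h5, h6, h7, h8]
  ring

theorem ladder_xy_closed_form (x y z : ℕ → ℝ)
    (hx1 : x 1 = 0) (hy1 : y 1 = 1) (hz1 : z 1 = 1)
    (hzrec : ∀ n : ℕ, 1 ≤ n → z (n + 1) = (z n + 2) / (z n + 3))
    (hxrec : ∀ n : ℕ, 1 ≤ n →
      x (n + 1) = (x n - y n + z n + 2) * (-x n + y n + z n + 4) / (4 * (z n + 3))
          + (x n + y n - z n) / 2)
    (hyrec : ∀ n : ℕ, 1 ≤ n →
      y (n + 1) = (-x n + y n + z n + 2) * (x n - y n + z n + 4) / (4 * (z n + 3))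
          + (x n + y n - z n) / 2) :
    ∀ n : ℕ, 1 ≤ n →
      x n = ((n : ℝ) - 2 - Real.sqrt 3) / 2 + Real.sqrt 3 / (1 + (2 - Real.sqrt 3) ^ n) ∧
      y n = ((n : ℝ) - 2 - Real.sqrt 3) / 2 + Real.sqrt 3 / (1 - (2 - Real.sqrt 3) ^ n) := by
  set r := Real.sqrt 3 with hrdef
  have hr : r ^ 2 = 3 := Real.sq_sqrt (by norm_num)
  have hr0 : 0 ≤ r := Real.sqrt_nonneg 3
  have hr1 : 1 < r := by nlinarith
  have hr2 : r < 2 := by nlinarith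
  obtain ⟨h3, h4, h5, h6, h7, h8⟩ := rpows r hr
  have key : ∀ n : ℕ, 1 ≤ n →
      x n = ((n : ℝ) - 2 - r) / 2 + r / (1 + (2 - r) ^ n) ∧
      y n = ((n : ℝ) - 2 - r) / 2 + r / (1 - (2 - r) ^ n) ∧
      z n = (r - 1 + (r+1)*((2-r)^n)^2)/(1 - ((2-r)^n)^2) := by
    intro n hn
    induction n, hn using Nat.le_induction with
    | base =>
      refine ⟨?_, ?_, ?_⟩
      · rw [hx1]
        push_cast
        rw [pow_one]
        have hne : (1:ℝ) + (2 - r) ≠ 0 := by linarith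
        field_simp
        ring_nf
        simp only [hr, h3, h4, h5, h6, h7, h8]
        ring
      · rw [hy1]
        push_cast
        rw [pow_one]
        have hne : (1:ℝ) - (2 - r) ≠ 0 := by linarith
        field_simp
        ring_nf
        simp only [hr, h3, h4, h5, h6, h7, h8]
        ring
      · rw [hz1]
        push_cast
        rw [pow_one]
        have h1 : 1 - (2 - r)^2 ≠ 0 := by nlinarith
        field_simp
        ring_nf
        simp only [hr, h3, h4, h5, h6, h7, h8]
        ring
    | succ n hn ih =>
      obtain ⟨ihx, ihy, ihz⟩ := ih
      have hu0 : 0 < (2 - r) ^ n := pow_pos (by linarith) n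
      have hu1 : (2 - r) ^ n < 1 :=
        pow_lt_one₀ (by linarith) (by linarith) (by omega)
      refine ⟨?_, ?_, ?_⟩
      · rw [hxrec n hn, ihx, ihy, ihz]
        push_cast
        rw [show (2-r)^(n+1) = (2-r)*(2-r)^n from pow_succ' _ _]
        linear_combination (xstep r ((2-r)^n) hr hr1 hr2 hu0 hu1).symm
      · rw [hyrec n hn, ihx, ihy, ihz]
        push_cast
        rw [show (2-r)^(n+1) = (2-r)*(2-r)^n from pow_succ' _ _]
        linear_combination (ystep r ((2-r)^n) hr hr1 hr2 hu0 hu1).symm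
      · rw [hzrec n hn, ihz]
        rw [show (2-r)^(n+1) = (2-r)*(2-r)^n from pow_succ' _ _]
        exact (zstep r ((2-r)^n) hr hr1 hr2 hu0 hu1).symm
  intro n hn
  exact ⟨(key n hn).1, (key n hn).2.1⟩
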